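/- Let f, g ∈ L²(ℝ) be supported in [0, ∞). For fixed integers 1 ≤ j < k and S₀ > 0, the inner product term λ^{−j−k} ∫₀^{S₀} f(λ^{−j} x) g(λ^{−k} x) dx tends to 0 as λ → ∞, provided f is continuous with f(0) = 0. -/

import Mathlib

open MeasureTheory Filter

/-- Pseudo-orthogonality: profiles of different scales almost do not interact. -/
theorem pseudo_orthogonality (f g : ℝ → ℝ)
    (hf2 : MemLp f 2 volume) (hg2 : MemLp g 2 volume)
    (hfsupp : ∀ x : ℝ, x < 0 → f x = 0) (hgsupp : ∀ x : ℝ, x < 0 → g x = 0)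
    (hfc : Continuous f) (hf0 : f 0 = 0)
    (j k : ℕ) (hj : 1 ≤ j) (hjk : j < k) (S₀ : ℝ) (hS₀ : 0 < S₀) :
    Tendsto (fun lam : ℝ =>
        lam ^ (-(j : ℤ) - (k : ℤ)) *
          ∫ x in (0:ℝ)..S₀, f (lam ^ (-(j : ℤ)) * x) * g (lam ^ (-(k : ℤ)) * x))
      atTop (nhds 0) := by
  -- bound for f on [0, S₀]
  obtain ⟨M, hM⟩ := (isCompact_Icc : IsCompact (Set.Icc (0:ℝ) S₀)).exists_bound_of_continuousOn
    hfc.continuousOn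
  have hM0 : 0 ≤ M := (norm_nonneg _).trans (hM 0 ⟨le_rfl, hS₀.le⟩)
  -- g is integrable on [0, S₀]
  have hgint : IntervalIntegrable g volume 0 S₀ := by
    rw [intervalIntegrable_iff_integrableOn_Ioc_of_le hS₀.le]
    exact ((hg2.restrict (Set.Ioc 0 S₀)).integrable one_le_two)
  have hgabs : IntervalIntegrable (fun x => |g x|) volume 0 S₀ := hgint.abs
  set B : ℝ := ∫ x in (0:ℝ)..S₀, |g x| with hBdef
  have hB0 : 0 ≤ B := intervalIntegral.integral_nonneg hS₀.le fun x _ => abs_nonneg _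
  apply squeeze_zero_norm' (a := fun lam : ℝ => (M * B) / lam)
  · filter_upwards [eventually_ge_atTop (1:ℝ)] with lam hlam
    have hlam0 : (0:ℝ) < lam := lt_of_lt_of_le one_pos hlam
    set cj : ℝ := lam ^ (-(j:ℤ)) with hcjdef
    set ck : ℝ := lam ^ (-(k:ℤ)) with hckdef
    have hcj : 0 < cj := zpow_pos hlam0 _
    have hck : 0 < ck := zpow_pos hlam0 _
    have hcj1 : cj ≤ 1 := zpow_le_one_of_nonpos₀ hlam (by omega)
    have hck1 : ck ≤ 1 := zpow_le_one_of_nonpos₀ hlam (by omega)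
    -- integrability of x ↦ g (ck * x) on [0, S₀]
    have hgsub : IntervalIntegrable g volume 0 (ck * S₀) := by
      apply hgint.mono_set
      rw [Set.uIcc_of_le (by positivity : (0:ℝ) ≤ ck * S₀), Set.uIcc_of_le hS₀.le]
      exact Set.Icc_subset_Icc le_rfl (by nlinarith)
    have hGint : IntervalIntegrable (fun x => g (ck * x)) volume 0 S₀ := by
      have := hgsub.comp_mul_left (c := ck)
      simpa [hck.ne', mul_div_assoc, mul_div_cancel_left₀] using this
    have hFGint : IntervalIntegrable (fun x => f (cj * x) * g (ck * x)) volume 0 S₀ :=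
      hGint.continuousOn_mul ((hfc.comp (continuous_const.mul continuous_id)).continuousOn)
    have hGabs : IntervalIntegrable (fun x => M * |g (ck * x)|) volume 0 S₀ :=
      hGint.abs.const_mul M
    -- pointwise bound
    have hpt : ∀ x ∈ Set.Icc (0:ℝ) S₀,
        |f (cj * x) * g (ck * x)| ≤ M * |g (ck * x)| := by
      intro x hx
      rw [abs_mul]
      apply mul_le_mul_of_nonneg_right _ (abs_nonneg _)
      have : cj * x ∈ Set.Icc (0:ℝ) S₀ := by
        constructor
        · exact mul_nonneg hcj.le hx.1
        · nlinarith [hx.1, hx.2]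
      simpa [Real.norm_eq_abs] using hM _ this
    have step1 : |∫ x in (0:ℝ)..S₀, f (cj * x) * g (ck * x)|
        ≤ M * ∫ x in (0:ℝ)..S₀, |g (ck * x)| := by
      calc |∫ x in (0:ℝ)..S₀, f (cj * x) * g (ck * x)|
          ≤ ∫ x in (0:ℝ)..S₀, |f (cj * x) * g (ck * x)| :=
            intervalIntegral.abs_integral_le_integral_abs hS₀.le
        _ ≤ ∫ x in (0:ℝ)..S₀, M * |g (ck * x)| :=
            intervalIntegral.integral_mono_on hS₀.le hFGint.abs hGabs hpt
        _ = M * ∫ x in (0:ℝ)..S₀, |g (ck * x)| := intervalIntegral.integral_const_mul _ _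
    have step2 : (∫ x in (0:ℝ)..S₀, |g (ck * x)|) ≤ ck⁻¹ * B := by
      have hsub : (∫ x in (0:ℝ)..S₀, |g (ck * x)|)
          = ck⁻¹ * ∫ x in (0:ℝ)..(ck * S₀), |g x| := by
        rw [intervalIntegral.integral_comp_mul_left (fun x => |g x|) hck.ne']
        simp [smul_eq_mul]
      rw [hsub]
      apply mul_le_mul_of_nonneg_left _ (by positivity)
      exact intervalIntegral.integral_mono_interval le_rfl (by positivity) (by nlinarith)
        (Filter.Eventually.of_forall fun x => abs_nonneg _) hgabs
    have hpref : lam ^ (-(j:ℤ) - (k:ℤ)) = cj * ck := by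
      rw [hcjdef, hckdef, ← zpow_add₀ hlam0.ne']
      ring_nf
    have hbound : ‖lam ^ (-(j:ℤ) - (k:ℤ)) *
        ∫ x in (0:ℝ)..S₀, f (cj * x) * g (ck * x)‖ ≤ cj * (M * B) := by
      rw [Real.norm_eq_abs, abs_mul, hpref, abs_of_pos (mul_pos hcj hck)]
      calc cj * ck * |∫ x in (0:ℝ)..S₀, f (cj * x) * g (ck * x)|
          ≤ cj * ck * (M * (ck⁻¹ * B)) := by
            apply mul_le_mul_of_nonneg_left _ (by positivity)
            exact step1.trans (mul_le_mul_of_nonneg_left step2 hM0)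
        _ = cj * (M * B) := by field_simp
      done
    refine hbound.trans ?_
    have hcjle : cj ≤ 1 / lam := by
      rw [hcjdef, one_div, ← zpow_neg_one]
      exact zpow_le_zpow_right₀ hlam (by omega)
    calc cj * (M * B) ≤ (1 / lam) * (M * B) :=
          mul_le_mul_of_nonneg_right hcjle (by positivity)
      _ = (M * B) / lam := by ring
  · exact Tendsto.div_atTop tendsto_const_nhds tendsto_id
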